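/- Define matrices C_1, C_3, C_4 as: C_1^T = (𝟙^T α)/(𝟙^T α 𝟙) with α = W^{-1} M A, C_3 = −α(I_n − 𝟙 C_1^T), C_4 = α 𝟙 C_2 − W^{-1} V with C_2 = (D* + 𝟙^T W^{-1} V)/(𝟙^T α 𝟙). Then for any T ∈ ℝ^n, setting D = C_3 T + C_4 and T_sup = C_1^T T + C_2, the pair (D, T_sup) satisfies both 𝟙^T D = D* and 0 = A(T − T_sup 𝟙) + M^{-1}(V + W D). (Converse to the uniqueness lemmas.) -/

import Mathlib

open Matrix

lemma vecMulVec_mulVec' {n : ℕ} (u v x : Fin n → ℝ) :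
    (Matrix.vecMulVec u v).mulVec x = (v ⬝ᵥ x) • u := by
  ext i
  simp [Matrix.mulVec, Matrix.vecMulVec_apply, dotProduct, Finset.mul_sum,
    Pi.smul_apply, smul_eq_mul, Finset.sum_mul, mul_assoc, mul_comm, mul_left_comm]

/-- converse to the uniqueness lemmas: For any temperature
distribution `T`, setting `D = C₃ T + C₄` and `T_sup = C₁ᵀ T + C₂` satisfies
both the total-workload constraint and the steady-state constraint. -/
theorem stmt17 (n : ℕ) (w m : Fin n → ℝ) (cp : ℝ) (A : Matrix (Fin n) (Fin n) ℝ)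
    (V : Fin n → ℝ) (Dstar : ℝ)
    (hw : ∀ i, 0 < w i) (hm : ∀ i, 0 < m i) (hcp : 0 < cp)
    (hAunit : IsUnit A)
    (ones : Fin n → ℝ) (hones : ones = fun _ => 1)
    (W M : Matrix (Fin n) (Fin n) ℝ)
    (hW : W = Matrix.diagonal w) (hM : M = Matrix.diagonal (fun i => cp * m i))
    (s : ℝ) (hs : s = Matrix.vecMul ones (W⁻¹ * M * A) ⬝ᵥ ones) (hs0 : s ≠ 0)
    (C1 : Fin n → ℝ) (hC1 : C1 = s⁻¹ • Matrix.vecMul ones (W⁻¹ * M * A))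
    (C2 : ℝ) (hC2 : C2 = (Dstar + ones ⬝ᵥ (W⁻¹).mulVec V) / s)
    (C3 : Matrix (Fin n) (Fin n) ℝ)
    (hC3 : C3 = -(W⁻¹ * M * A) * (1 - Matrix.vecMulVec ones C1))
    (C4 : Fin n → ℝ)
    (hC4 : C4 = C2 • (W⁻¹ * M * A).mulVec ones - (W⁻¹).mulVec V)
    (T : Fin n → ℝ)
    (D : Fin n → ℝ) (hD : D = C3.mulVec T + C4)
    (Tsup : ℝ) (hTsup : Tsup = C1 ⬝ᵥ T + C2) :
    ones ⬝ᵥ D = Dstar ∧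
    0 = A.mulVec (T - Tsup • ones) + (M⁻¹).mulVec (V + W.mulVec D) := by
  set α := W⁻¹ * M * A with hα
  have hWu : IsUnit W := by
    rw [hW, Matrix.isUnit_diagonal]
    exact IsUnit.of_mul_eq_one (fun i => (w i)⁻¹)
      (funext fun i => mul_inv_cancel₀ (hw i).ne')
  have hMu : IsUnit M := by
    rw [hM, Matrix.isUnit_diagonal]
    exact IsUnit.of_mul_eq_one (fun i => (cp * m i)⁻¹)
      (funext fun i => mul_inv_cancel₀ (mul_pos hcp (hm i)).ne')
  -- main identity: D = α.mulVec (Tsup • ones - T) - W⁻¹.mulVec V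
  have hDkey : D = α.mulVec (Tsup • ones - T) - (W⁻¹).mulVec V := by
    rw [hD, hC3, hC4, hTsup]
    rw [Matrix.neg_mul, Matrix.neg_mulVec, ← Matrix.mulVec_mulVec,
      Matrix.sub_mulVec, Matrix.one_mulVec, vecMulVec_mulVec']
    simp only [Matrix.mulVec_sub, Matrix.mulVec_add, Matrix.mulVec_smul, add_smul]
    abel
  have hsum1 : ones ⬝ᵥ D = Dstar := by
    rw [hDkey, dotProduct_sub, Matrix.dotProduct_mulVec,
      dotProduct_sub, dotProduct_smul]
    have h1 : Matrix.vecMul ones α ⬝ᵥ ones = s := hs.symm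
    have h2 : Matrix.vecMul ones α ⬝ᵥ T = s * (C1 ⬝ᵥ T) := by
      rw [hC1, smul_dotProduct, smul_eq_mul, ← mul_assoc,
        mul_inv_cancel₀ hs0, one_mul]
    rw [h1, h2, hTsup, hC2, smul_eq_mul]
    field_simp
    ring
  refine ⟨hsum1, ?_⟩
  have hWD : W.mulVec D = (M * A).mulVec (Tsup • ones - T) - V := by
    rw [hDkey, Matrix.mulVec_sub, Matrix.mulVec_mulVec, Matrix.mulVec_mulVec, hα,
      ← Matrix.mul_assoc, ← Matrix.mul_assoc, Matrix.mul_nonsing_inv W ((Matrix.isUnit_iff_isUnit_det W).mp hWu), Matrix.one_mul,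
      Matrix.one_mulVec]
  rw [hWD]
  have : V + ((M * A).mulVec (Tsup • ones - T) - V) = (M * A).mulVec (Tsup • ones - T) := by
    abel
  rw [this, ← Matrix.mulVec_mulVec, Matrix.mulVec_mulVec, Matrix.nonsing_inv_mul M ((Matrix.isUnit_iff_isUnit_det M).mp hMu),
    Matrix.one_mulVec]
  rw [← Matrix.mulVec_add]
  have : T - Tsup • ones + (Tsup • ones - T) = 0 := by abel
  rw [this, Matrix.mulVec_zero]
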